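/- Let (Ω, 𝒜, P) be a probability space, H a measurable space, E a real normed vector space, and n ≥ 1. Let X₁, …, Xₙ : Ω → H be independent, identically distributed measurable random elements with common law ν. Let F be a nonempty finite set of measurable functions g : H → E with cardinality N, and let g* : H → E be a fixed measurable function. Let ℓ : H × E → ℝ be measurable such that a ≤ ℓ(x, z) ≤ b for all (x, z) ∈ H × E (with a ≤ b), and such that for every x ∈ H the map z ↦ ℓ(x, z) is λ-Lipschitz. Then for every δ ∈ (0, 1), with probability at least 1 − δ the following holds simultaneously for every g ∈ F: |∫ ℓ(x, g(x)) dν(x) − (1/n) ∑_{i=1}^{n} ℓ(Xᵢ, g*(Xᵢ))| ≤ |a − b| · √(log(2N/δ)/(2n)) + λ · (1/n) ∑_{i=1}^{n} ‖g(Xᵢ) − g*(Xᵢ)‖. -/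

import Mathlib

open MeasureTheory ProbabilityTheory Finset

open Real in
lemma hoeffding_aux {p : ℝ} (hp0 : 0 ≤ p) (hp1 : p ≤ 1) (h : ℝ) :
    -p * h + Real.log (1 - p + p * Real.exp h) ≤ h ^ 2 / 8 := by
  rcases eq_or_lt_of_le hp0 with hp0' | hp0'
  · simp [← hp0']
    positivity
  rcases eq_or_lt_of_le hp1 with hp1' | hp1'
  · subst hp1'
    simp [Real.log_exp]
    nlinarith [sq_nonneg h]
  -- 0 < p < 1
  have hD : ∀ x : ℝ, 0 < 1 - p + p * Real.exp x := fun x => by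
    nlinarith [Real.exp_pos x]
  set G : ℝ → ℝ := fun x => x / 4 + p - p * Real.exp x / (1 - p + p * Real.exp x) with hGdef
  have hDd : ∀ x : ℝ, HasDerivAt (fun y => 1 - p + p * Real.exp y) (p * Real.exp x) x := by
    intro x
    simpa using ((Real.hasDerivAt_exp x).const_mul p).const_add (1 - p)
  have hG' : ∀ x : ℝ, HasDerivAt G
      (1 / 4 - p * (1 - p) * Real.exp x / (1 - p + p * Real.exp x) ^ 2) x := by
    intro x
    have h1 : HasDerivAt (fun y : ℝ => y / 4 + p) (1 / 4) x := by
      simpa using (hasDerivAt_id x).div_const 4 |>.add_const p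
    have h2 : HasDerivAt (fun y => p * Real.exp y) (p * Real.exp x) x :=
      (Real.hasDerivAt_exp x).const_mul p
    have h3 := h2.div (hDd x) (hD x).ne'
    have := h1.sub h3
    refine this.congr_deriv ?_
    have := (hD x).ne'
    field_simp
    ring
  have hGmono : Monotone G := by
    apply monotone_of_deriv_nonneg (fun x => (hG' x).differentiableAt)
    intro x
    rw [(hG' x).deriv]
    rw [sub_nonneg, div_le_div_iff₀ (pow_pos (hD x) 2) (by norm_num : (0:ℝ) < 4)]
    nlinarith [sq_nonneg (1 - p - p * Real.exp x), Real.exp_pos x]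
  have hG0 : G 0 = 0 := by
    simp [hGdef]
  set g : ℝ → ℝ := fun x => x ^ 2 / 8 + p * x - Real.log (1 - p + p * Real.exp x) with hgdef
  have hg' : ∀ x : ℝ, HasDerivAt g (G x) x := by
    intro x
    have h1 : HasDerivAt (fun y : ℝ => y ^ 2 / 8 + p * y) (x / 4 + p) x := by
      have := ((hasDerivAt_pow 2 x).div_const 8).add ((hasDerivAt_id x).const_mul p)
      refine this.congr_deriv ?_
      ring
    have h2 : HasDerivAt (fun y => Real.log (1 - p + p * Real.exp y))
        (p * Real.exp x / (1 - p + p * Real.exp x)) x := (hDd x).log (hD x).ne'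
    exact h1.sub h2
  have hg0 : g 0 = 0 := by simp [hgdef]
  have key : ∀ x : ℝ, 0 ≤ g x := by
    intro x
    rcases le_total 0 x with hx | hx
    · have : MonotoneOn g (Set.Ici 0) := by
        apply monotoneOn_of_deriv_nonneg (convex_Ici 0)
          ((Differentiable.continuous (fun y => (hg' y).differentiableAt)).continuousOn)
          (fun y _ => (hg' y).differentiableAt.differentiableWithinAt)
        intro y hy
        rw [(hg' y).deriv]
        rw [interior_Ici] at hy
        calc (0:ℝ) = G 0 := hG0.symm
        _ ≤ G y := hGmono hy.le
      have := this Set.self_mem_Ici hx hx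
      rwa [hg0] at this
    · have : AntitoneOn g (Set.Iic 0) := by
        apply antitoneOn_of_deriv_nonpos (convex_Iic 0)
          ((Differentiable.continuous (fun y => (hg' y).differentiableAt)).continuousOn)
          (fun y _ => (hg' y).differentiableAt.differentiableWithinAt)
        intro y hy
        rw [(hg' y).deriv]
        rw [interior_Iic] at hy
        calc G y ≤ G 0 := hGmono hy.le
        _ = 0 := hG0
      have := this hx Set.self_mem_Iic hx
      rwa [hg0] at this
  have := key h
  simp only [hgdef] at this
  linarith

lemma hoeffding_mgf {Ω : Type*} [MeasureSpace Ω] [IsProbabilityMeasure (ℙ : Measure Ω)]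
    {Y : Ω → ℝ} (hY : Measurable Y) {c d : ℝ}
    (hb : ∀ ω, Y ω ∈ Set.Icc c d) (hmean : ∫ ω, Y ω = 0) (t : ℝ) :
    mgf Y ℙ t ≤ Real.exp (t ^ 2 * (d - c) ^ 2 / 8) := by
  have hYint : Integrable Y ℙ := by
    refine (integrable_const (max |c| |d|)).mono' hY.aestronglyMeasurable ?_
    filter_upwards with ω
    rw [Real.norm_eq_abs]
    rcases abs_cases (Y ω) with ⟨h1, _⟩ | ⟨h1, _⟩
    · rw [h1]; exact le_trans (hb ω).2 ((le_abs_self d).trans (le_max_right _ _))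
    · rw [h1]; exact le_trans (neg_le_neg (hb ω).1) ((neg_le_abs c).trans (le_max_left _ _))
  have hc0 : c ≤ 0 := by
    have : ∫ ω, (c : ℝ) ≤ ∫ ω, Y ω := integral_mono (integrable_const c) hYint (fun ω => (hb ω).1)
    simpa [hmean] using this
  have hd0 : 0 ≤ d := by
    have : ∫ ω, Y ω ≤ ∫ ω, (d : ℝ) := integral_mono hYint (integrable_const d) (fun ω => (hb ω).2)
    simpa [hmean] using this
  rcases eq_or_lt_of_le (hc0.trans hd0) with hcd | hcd
  · -- c = d hence c = 0 = d and Y ≡ 0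
    have hc : c = 0 := le_antisymm hc0 (hcd ▸ hd0)
    have hYeq : ∀ ω, Y ω = 0 := fun ω =>
      le_antisymm (hc ▸ hcd ▸ (hb ω).2) (hc ▸ (hb ω).1)
    have : mgf Y ℙ t = 1 := by
      unfold mgf
      simp [hYeq]
    rw [this]
    exact Real.one_le_exp (by positivity)
  -- c < d
  set p : ℝ := -c / (d - c) with hp
  have hdc : (0:ℝ) < d - c := by linarith
  have hp0 : 0 ≤ p := div_nonneg (by linarith) hdc.le
  have hp1 : p ≤ 1 := by
    rw [div_le_one hdc]; linarith
  -- pointwise convexity bound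
  have hconv : ∀ ω, Real.exp (t * Y ω) ≤
      ((d - Y ω) * Real.exp (t * c) + (Y ω - c) * Real.exp (t * d)) / (d - c) := by
    intro ω
    set θ : ℝ := (d - Y ω) / (d - c) with hθ
    have hθ0 : 0 ≤ θ := div_nonneg (by linarith [(hb ω).2]) hdc.le
    have hθ1 : θ ≤ 1 := by rw [div_le_one hdc]; linarith [(hb ω).1]
    have hsum : θ + (1 - θ) = 1 := by ring
    have := convexOn_exp.2 (Set.mem_univ (t * c)) (Set.mem_univ (t * d)) hθ0
      (by linarith : 0 ≤ 1 - θ) hsum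
    simp only [smul_eq_mul] at this
    have hy : θ * (t * c) + (1 - θ) * (t * d) = t * Y ω := by
      rw [hθ]
      field_simp
      ring
    rw [hy] at this
    refine this.trans (le_of_eq ?_)
    rw [hθ]
    field_simp
    ring
  have hexp_int : Integrable (fun ω => Real.exp (t * Y ω)) ℙ := by
    refine (integrable_const (Real.exp (|t| * max |c| |d|))).mono'
      ((Real.measurable_exp.comp (hY.const_mul t)).aestronglyMeasurable) ?_
    filter_upwards with ω
    rw [Real.norm_eq_abs, abs_of_pos (Real.exp_pos _)]
    apply Real.exp_le_exp.2
    calc t * Y ω ≤ |t * Y ω| := le_abs_self _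
    _ = |t| * |Y ω| := abs_mul t (Y ω)
    _ ≤ |t| * max |c| |d| := by
        apply mul_le_mul_of_nonneg_left _ (abs_nonneg t)
        rcases abs_cases (Y ω) with ⟨h1, _⟩ | ⟨h1, _⟩
        · rw [h1]; exact le_trans (hb ω).2 ((le_abs_self d).trans (le_max_right _ _))
        · rw [h1]; exact le_trans (neg_le_neg (hb ω).1) ((neg_le_abs c).trans (le_max_left _ _))
  have hmgf : mgf Y ℙ t ≤ (d * Real.exp (t * c) - c * Real.exp (t * d)) / (d - c) := by
    unfold mgf
    have h1 : ∫ ω, Real.exp (t * Y ω) ≤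
        ∫ ω, ((d - Y ω) * Real.exp (t * c) + (Y ω - c) * Real.exp (t * d)) / (d - c) := by
      refine integral_mono hexp_int ?_ hconv
      apply Integrable.div_const
      exact ((( integrable_const d).sub hYint).mul_const _).add ((hYint.sub (integrable_const c)).mul_const _)
    refine h1.trans (le_of_eq ?_)
    rw [integral_div]
    congr 1
    have e1 : Integrable (fun a => (d - Y a) * Real.exp (t*c)) ℙ :=
      ((integrable_const d).sub hYint).mul_const _
    have e2 : Integrable (fun a => (Y a - c) * Real.exp (t*d)) ℙ :=
      (hYint.sub (integrable_const c)).mul_const _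
    rw [integral_add e1 e2, integral_mul_const, integral_mul_const,
      integral_sub (integrable_const d) hYint, integral_sub hYint (integrable_const c),
      hmean]
    simp [measure_univ]
    ring
  refine hmgf.trans ?_
  -- identify with the aux function
  set h : ℝ := t * (d - c) with hh
  have hD : (d * Real.exp (t * c) - c * Real.exp (t * d)) / (d - c)
      = Real.exp (t * c) * (1 - p + p * Real.exp h) := by
    rw [hh, hp]
    have : Real.exp (t * d) = Real.exp (t * c) * Real.exp (t * (d - c)) := by
      rw [← Real.exp_add]; ring_nf
    rw [this]
    field_simp
    ring
  rw [hD]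
  have hDpos : 0 < 1 - p + p * Real.exp h := by
    rcases eq_or_lt_of_le hp0 with h0 | h0
    · rw [← h0]; norm_num
    · nlinarith [Real.exp_pos h, hp1]
  have haux := hoeffding_aux hp0 hp1 h
  have hph : p * h = -(t * c) := by
    rw [hp, hh]; field_simp
  have : Real.log (Real.exp (t * c) * (1 - p + p * Real.exp h)) ≤ t ^ 2 * (d - c) ^ 2 / 8 := by
    rw [Real.log_mul (Real.exp_pos _).ne' hDpos.ne', Real.log_exp]
    have : h ^ 2 = t ^ 2 * (d - c) ^ 2 := by rw [hh]; ring
    nlinarith [haux]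
  calc Real.exp (t*c) * (1 - p + p * Real.exp h)
      = Real.exp (Real.log (Real.exp (t*c) * (1 - p + p * Real.exp h))) := by
        rw [Real.exp_log (by positivity)]
    _ ≤ Real.exp (t ^ 2 * (d - c) ^ 2 / 8) := Real.exp_le_exp.2 this

lemma hoeffding_tail_upper {Ω : Type*} [MeasureSpace Ω] [IsProbabilityMeasure (ℙ : Measure Ω)]
    {n : ℕ} (hn : 1 ≤ n) {Y : Fin n → Ω → ℝ}
    (hind : iIndepFun Y ℙ) (hmeas : ∀ i, Measurable (Y i))
    {c d : ℝ} (hcd : c < d) (hb : ∀ i ω, Y i ω ∈ Set.Icc c d)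
    (hmean : ∀ i, ∫ ω, Y i ω = 0) {ε : ℝ} (hε : 0 ≤ ε) :
    (ℙ {ω | ε ≤ ∑ i, Y i ω}).toReal ≤ Real.exp (-(2 * ε ^ 2) / (n * (d - c) ^ 2)) := by
  set t : ℝ := 4 * ε / (n * (d - c) ^ 2) with ht
  have hn0 : (0:ℝ) < n := by exact_mod_cast hn
  have hdc : (0:ℝ) < d - c := by linarith
  have ht0 : 0 ≤ t := by positivity
  have hexp_int : ∀ i, Integrable (fun ω => Real.exp (t * Y i ω)) ℙ := by
    intro i
    refine (integrable_const (Real.exp (t * max |c| |d|))).mono'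
      ((Real.measurable_exp.comp ((hmeas i).const_mul t)).aestronglyMeasurable) ?_
    filter_upwards with ω
    rw [Real.norm_eq_abs, abs_of_pos (Real.exp_pos _)]
    apply Real.exp_le_exp.2
    apply mul_le_mul_of_nonneg_left _ ht0
    calc Y i ω ≤ d := (hb i ω).2
    _ ≤ |d| := le_abs_self d
    _ ≤ max |c| |d| := le_max_right _ _
  have hS_int : Integrable (fun ω => Real.exp (t * (∑ i, Y i) ω)) ℙ :=
    hind.integrable_exp_mul_sum hmeas (fun i _ => hexp_int i)
  have key := measure_ge_le_exp_mul_mgf (X := ∑ i, Y i) (μ := ℙ) ε ht0 hS_int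
  have hSeq : {ω | ε ≤ (∑ i, Y i) ω} = {ω | ε ≤ ∑ i, Y i ω} := by
    ext ω; simp [Finset.sum_apply]
  rw [hSeq] at key
  refine key.trans ?_
  have hmgf : mgf (∑ i, Y i) ℙ t ≤ Real.exp ((n : ℝ) * (t ^ 2 * (d - c) ^ 2 / 8)) := by
    rw [hind.mgf_sum hmeas]
    calc ∏ i, mgf (Y i) ℙ t ≤ ∏ _i : Fin n, Real.exp (t ^ 2 * (d - c) ^ 2 / 8) := by
          refine Finset.prod_le_prod (fun i _ => mgf_nonneg) (fun i _ => ?_)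
          exact hoeffding_mgf (hmeas i) (hb i) (hmean i) t
      _ = Real.exp ((n : ℝ) * (t ^ 2 * (d - c) ^ 2 / 8)) := by
          rw [Finset.prod_const, ← Real.exp_nat_mul]
          simp
  calc Real.exp (-t * ε) * mgf (∑ i, Y i) ℙ t
      ≤ Real.exp (-t * ε) * Real.exp ((n : ℝ) * (t ^ 2 * (d - c) ^ 2 / 8)) :=
        mul_le_mul_of_nonneg_left hmgf (Real.exp_pos _).le
    _ = Real.exp (-t * ε + (n : ℝ) * (t ^ 2 * (d - c) ^ 2 / 8)) := (Real.exp_add _ _).symm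
    _ = Real.exp (-(2 * ε ^ 2) / (n * (d - c) ^ 2)) := by
        congr 1
        rw [ht]
        field_simp
        ring

lemma hoeffding_tail_two {Ω : Type*} [MeasureSpace Ω] [IsProbabilityMeasure (ℙ : Measure Ω)]
    {n : ℕ} (hn : 1 ≤ n) {Y : Fin n → Ω → ℝ}
    (hind : iIndepFun Y ℙ) (hmeas : ∀ i, Measurable (Y i))
    {c d : ℝ} (hcd : c < d) (hb : ∀ i ω, Y i ω ∈ Set.Icc c d)
    (hmean : ∀ i, ∫ ω, Y i ω = 0) {ε : ℝ} (hε : 0 ≤ ε) :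
    ℙ {ω | ε < |∑ i, Y i ω|} ≤
      ENNReal.ofReal (2 * Real.exp (-(2 * ε ^ 2) / (n * (d - c) ^ 2))) := by
  have hup := hoeffding_tail_upper hn hind hmeas hcd hb hmean hε
  have hindZ : iIndepFun (fun i ω => -(Y i ω)) ℙ :=
    hind.comp (fun _ => (fun x : ℝ => -x)) (fun _ => measurable_neg)
  have hmeasZ : ∀ i, Measurable (fun ω => -(Y i ω)) := fun i => (hmeas i).neg
  have hbZ : ∀ i ω, -(Y i ω) ∈ Set.Icc (-d) (-c) := fun i ω =>
    ⟨neg_le_neg (hb i ω).2, neg_le_neg (hb i ω).1⟩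
  have hmeanZ : ∀ i, ∫ ω, -(Y i ω) = 0 := fun i => by
    rw [integral_neg, hmean i, neg_zero]
  have hlow := hoeffding_tail_upper hn hindZ hmeasZ (by linarith : -d < -c) hbZ hmeanZ hε
  have hZsum : ∀ ω, ∑ i, -(Y i ω) = -∑ i, Y i ω := fun ω => by
    rw [Finset.sum_neg_distrib]
  simp only [hZsum] at hlow
  have hdd : (-c) - (-d) = d - c := by ring
  rw [hdd] at hlow
  have hsub : {ω | ε < |∑ i, Y i ω|} ⊆
      {ω | ε ≤ ∑ i, Y i ω} ∪ {ω | ε ≤ -∑ i, Y i ω} := by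
    intro ω hω
    simp only [Set.mem_setOf_eq] at hω
    rcases abs_cases (∑ i, Y i ω) with ⟨h1, _⟩ | ⟨h1, _⟩
    · left; rw [h1] at hω; exact hω.le
    · right; rw [h1] at hω; exact hω.le
  calc ℙ {ω | ε < |∑ i, Y i ω|} ≤ ℙ ({ω | ε ≤ ∑ i, Y i ω} ∪ {ω | ε ≤ -∑ i, Y i ω}) :=
        measure_mono hsub
    _ ≤ ℙ {ω | ε ≤ ∑ i, Y i ω} + ℙ {ω | ε ≤ -∑ i, Y i ω} := measure_union_le _ _
    _ ≤ ENNReal.ofReal (Real.exp (-(2 * ε ^ 2) / (n * (d - c) ^ 2))) +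
        ENNReal.ofReal (Real.exp (-(2 * ε ^ 2) / (n * (d - c) ^ 2))) := by
        gcongr
        · rw [← ENNReal.ofReal_toReal (measure_ne_top ℙ _)]
          exact ENNReal.ofReal_le_ofReal hup
        · rw [← ENNReal.ofReal_toReal (measure_ne_top ℙ _)]
          exact ENNReal.ofReal_le_ofReal hlow
    _ = ENNReal.ofReal (2 * Real.exp (-(2 * ε ^ 2) / (n * (d - c) ^ 2))) := by
        rw [← ENNReal.ofReal_add (Real.exp_pos _).le (Real.exp_pos _).le]
        congr 1
        ring

/-- Generalization bound for masked contrastive learning (Theorem 1): with probability at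
least `1 - δ`, simultaneously for every `g` in the finite function class `F` of size `N`,
the population risk of `g` differs from the empirical risk evaluated at the optimal map
`gstar` by at most a Hoeffding-type uniform deviation term `|a - b| * √(log(2N/δ)/(2n))`
plus `λ` times the empirical representation discrepancy `(1/n) ∑ᵢ ‖g(Xᵢ) - gstar(Xᵢ)‖`. -/
theorem masked_contrastive_generalization_bound
    {Ω : Type*} [MeasureSpace Ω] [IsProbabilityMeasure (ℙ : Measure Ω)]
    {H : Type*} [MeasurableSpace H]
    {E : Type*} [NormedAddCommGroup E] [NormedSpace ℝ E]
    [MeasurableSpace E] [BorelSpace E]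
    {n : ℕ} (hn : 1 ≤ n)
    (X : Fin n → Ω → H) (hXmeas : ∀ i, Measurable (X i))
    (hXindep : iIndepFun X ℙ)
    (ν : Measure H) (hXlaw : ∀ i, Measure.map (X i) ℙ = ν)
    (F : Finset (H → E)) (hFne : F.Nonempty) (hFmeas : ∀ g ∈ F, Measurable g)
    (N : ℕ) (hN : F.card = N)
    (gstar : H → E) (hgstar : Measurable gstar)
    (ℓ : H × E → ℝ) (hℓmeas : Measurable ℓ)
    (a b : ℝ) (hab : a ≤ b)
    (hℓbound : ∀ x z, a ≤ ℓ (x, z) ∧ ℓ (x, z) ≤ b)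
    (lam : NNReal) (hℓlip : ∀ x : H, LipschitzWith lam (fun z => ℓ (x, z)))
    (δ : ℝ) (hδ : δ ∈ Set.Ioo (0 : ℝ) 1) :
    ENNReal.ofReal (1 - δ) ≤
      ℙ {ω | ∀ g ∈ F,
        |∫ x, ℓ (x, g x) ∂ν - (1 / (n : ℝ)) * ∑ i, ℓ (X i ω, gstar (X i ω))| ≤
          |a - b| * Real.sqrt (Real.log (2 * N / δ) / (2 * n)) +
            (lam : ℝ) * ((1 / (n : ℝ)) * ∑ i, ‖g (X i ω) - gstar (X i ω)‖)} := by
  classical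
  have hn0 : (0:ℝ) < n := by exact_mod_cast hn
  have i0 : Fin n := ⟨0, hn⟩
  haveI hνprob : IsProbabilityMeasure ν := by
    rw [← hXlaw i0]; exact Measure.isProbabilityMeasure_map (hXmeas i0).aemeasurable
  have hδ1 : 0 < δ := hδ.1
  have hδ2 : δ < 1 := hδ.2
  have hrhs_nonneg : ∀ (g : H → E) (ω : Ω),
      0 ≤ |a - b| * Real.sqrt (Real.log (2 * N / δ) / (2 * n)) +
        (lam : ℝ) * ((1 / (n : ℝ)) * ∑ i, ‖g (X i ω) - gstar (X i ω)‖) := by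
    intro g ω
    have h1 : (0:ℝ) ≤ ∑ i, ‖g (X i ω) - gstar (X i ω)‖ :=
      Finset.sum_nonneg (fun i _ => norm_nonneg _)
    have h2 := Real.sqrt_nonneg (Real.log (2 * N / δ) / (2 * n))
    have h3 := abs_nonneg (a - b)
    have h4 : (0:ℝ) ≤ (lam : ℝ) := lam.2
    positivity
  rcases eq_or_lt_of_le hab with hab' | hab'
  · -- degenerate case a = b : the loss is constant
    have hconst : ∀ x z, ℓ (x, z) = a := fun x z =>
      le_antisymm (hab' ▸ (hℓbound x z).2) (hℓbound x z).1
    have huniv : {ω | ∀ g ∈ F,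
        |∫ x, ℓ (x, g x) ∂ν - (1 / (n : ℝ)) * ∑ i, ℓ (X i ω, gstar (X i ω))| ≤
          |a - b| * Real.sqrt (Real.log (2 * N / δ) / (2 * n)) +
            (lam : ℝ) * ((1 / (n : ℝ)) * ∑ i, ‖g (X i ω) - gstar (X i ω)‖)} = Set.univ := by
      ext ω
      simp only [Set.mem_setOf_eq, Set.mem_univ, iff_true]
      intro g hg
      have h1 : ∫ x, ℓ (x, g x) ∂ν = a := by
        simp only [hconst, integral_const, measure_univ, ENNReal.toReal_one, probReal_univ, smul_eq_mul, one_mul]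
      have h2 : ∑ i : Fin n, ℓ (X i ω, gstar (X i ω)) = n * a := by
        simp only [hconst, Finset.sum_const, Finset.card_univ, Fintype.card_fin,
          nsmul_eq_mul]
      rw [h1, h2]
      have h3 : a - 1 / (n : ℝ) * ((n : ℝ) * a) = 0 := by field_simp; ring
      rw [h3, abs_zero]
      exact hrhs_nonneg g ω
    rw [huniv, measure_univ]
    exact ENNReal.ofReal_le_one.2 (by linarith)
  -- main case a < b
  have hNpos : 0 < N := hN ▸ Finset.card_pos.2 hFne
  have hN0 : (0:ℝ) < N := by exact_mod_cast hNpos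
  have h2N : (1:ℝ) ≤ 2 * N / δ := by
    rw [le_div_iff₀ hδ1]
    have : (1:ℝ) ≤ N := by exact_mod_cast hNpos
    nlinarith
  have hlogpos : 0 ≤ Real.log (2 * N / δ) := Real.log_nonneg h2N
  have habs' : |a - b| = b - a := by rw [abs_sub_comm]; exact abs_of_pos (by linarith)
  set t₀ : ℝ := |a - b| * Real.sqrt (Real.log (2 * N / δ) / (2 * n)) with ht₀
  set ε : ℝ := n * t₀ with hεdef
  have ht₀0 : 0 ≤ t₀ := by
    rw [ht₀]; exact mul_nonneg (abs_nonneg _) (Real.sqrt_nonneg _)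
  have hε0 : 0 ≤ ε := by positivity
  -- per-function tail bound
  have key : ∀ g ∈ F,
      ℙ {ω | ε < |∑ i, (ℓ (X i ω, g (X i ω)) - ∫ x, ℓ (x, g x) ∂ν)|} ≤
        ENNReal.ofReal (δ / N) := by
    intro g hg
    have hgm : Measurable g := hFmeas g hg
    set μg : ℝ := ∫ x, ℓ (x, g x) ∂ν with hμg
    have hℓgm : Measurable (fun x => ℓ (x, g x)) :=
      hℓmeas.comp (measurable_id.prodMk hgm)
    have hφm : Measurable (fun x => ℓ (x, g x) - μg) := hℓgm.sub_const μg
    have hind : iIndepFun (fun i ω => ℓ (X i ω, g (X i ω)) - μg) ℙ :=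
      hXindep.comp (fun _ => fun x => ℓ (x, g x) - μg) (fun _ => hφm)
    have hmeasY : ∀ i, Measurable (fun ω => ℓ (X i ω, g (X i ω)) - μg) :=
      fun i => hφm.comp (hXmeas i)
    have hbY : ∀ i ω, ℓ (X i ω, g (X i ω)) - μg ∈ Set.Icc (a - μg) (b - μg) := fun i ω =>
      ⟨sub_le_sub_right (hℓbound _ _).1 _, sub_le_sub_right (hℓbound _ _).2 _⟩
    have hint : ∀ i, Integrable (fun ω => ℓ (X i ω, g (X i ω))) ℙ := by
      intro i
      refine (integrable_const (max |a| |b|)).mono'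
        ((hℓgm.comp (hXmeas i)).aestronglyMeasurable) ?_
      filter_upwards with ω
      rw [Real.norm_eq_abs]
      have hub := hℓbound (X i ω) (g (X i ω))
      rcases abs_cases (ℓ (X i ω, g (X i ω))) with ⟨h1, _⟩ | ⟨h1, _⟩
      · rw [h1]; exact le_trans hub.2 ((le_abs_self b).trans (le_max_right _ _))
      · rw [h1]; exact le_trans (neg_le_neg hub.1) ((neg_le_abs a).trans (le_max_left _ _))
    have hmeanY : ∀ i, ∫ ω, (ℓ (X i ω, g (X i ω)) - μg) = 0 := by
      intro i
      rw [integral_sub (hint i) (integrable_const μg), integral_const]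
      have hμ : ∫ ω, ℓ (X i ω, g (X i ω)) = μg := by
        rw [hμg, ← hXlaw i,
          integral_map (hXmeas i).aemeasurable hℓgm.aestronglyMeasurable]
      rw [hμ]
      simp [measure_univ]
    have htail := hoeffding_tail_two hn hind hmeasY
      (show a - μg < b - μg by linarith) hbY hmeanY hε0
    have hdc : (b - μg) - (a - μg) = b - a := by ring
    rw [hdc] at htail
    refine htail.trans (le_of_eq ?_)
    congr 1
    have hba : (0:ℝ) < b - a := by linarith
    have hsq : Real.sqrt (Real.log (2 * N / δ) / (2 * n)) ^ 2
        = Real.log (2 * N / δ) / (2 * n) := Real.sq_sqrt (by positivity)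
    have hε2 : ε ^ 2 = (n : ℝ) * (b - a) ^ 2 * Real.log (2 * N / δ) / 2 := by
      rw [hεdef, ht₀, habs', mul_pow, mul_pow, hsq]
      field_simp
    have hexp : -(2 * ε ^ 2) / ((n : ℝ) * (b - a) ^ 2) = -Real.log (2 * N / δ) := by
      rw [hε2]
      field_simp
    rw [hexp, Real.exp_neg, Real.exp_log (by positivity : (0:ℝ) < 2 * N / δ)]
    field_simp
  -- union bound
  set Bad : Set Ω :=
    ⋃ g ∈ F, {ω | ε < |∑ i, (ℓ (X i ω, g (X i ω)) - ∫ x, ℓ (x, g x) ∂ν)|} with hBadDef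
  have hBadMeas : MeasurableSet Bad := by
    refine MeasurableSet.biUnion F.countable_toSet (fun g hg => ?_)
    have hgm : Measurable g := hFmeas g hg
    have hsum : Measurable (fun ω => ∑ i, (ℓ (X i ω, g (X i ω)) - ∫ x, ℓ (x, g x) ∂ν)) :=
      Finset.measurable_sum _ (fun i _ =>
        ((hℓmeas.comp (measurable_id.prodMk hgm)).sub_const _).comp (hXmeas i))
    exact measurableSet_lt measurable_const hsum.abs
  have hBad : ℙ Bad ≤ ENNReal.ofReal δ := by
    calc ℙ Bad ≤ ∑ g ∈ F, ℙ {ω | ε < |∑ i, (ℓ (X i ω, g (X i ω)) - ∫ x, ℓ (x, g x) ∂ν)|} :=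
          measure_biUnion_finset_le F _
      _ ≤ ∑ _g ∈ F, ENNReal.ofReal (δ / N) := Finset.sum_le_sum key
      _ = (N : ENNReal) * ENNReal.ofReal (δ / N) := by
          rw [Finset.sum_const, hN, nsmul_eq_mul]
      _ = ENNReal.ofReal δ := by
          rw [← ENNReal.ofReal_natCast N, ← ENNReal.ofReal_mul (Nat.cast_nonneg N)]
          congr 1
          field_simp
  -- the good event contains the complement of Bad
  have hsub : Badᶜ ⊆ {ω | ∀ g ∈ F,
      |∫ x, ℓ (x, g x) ∂ν - (1 / (n : ℝ)) * ∑ i, ℓ (X i ω, gstar (X i ω))| ≤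
        |a - b| * Real.sqrt (Real.log (2 * N / δ) / (2 * n)) +
          (lam : ℝ) * ((1 / (n : ℝ)) * ∑ i, ‖g (X i ω) - gstar (X i ω)‖)} := by
    intro ω hω g hg
    have hωg : |∑ i, (ℓ (X i ω, g (X i ω)) - ∫ x, ℓ (x, g x) ∂ν)| ≤ ε := by
      by_contra hc
      push_neg at hc
      exact hω (Set.mem_biUnion hg hc)
    set μg : ℝ := ∫ x, ℓ (x, g x) ∂ν with hμg
    have hsum1 : ∑ i, (ℓ (X i ω, g (X i ω)) - μg)
        = ∑ i, ℓ (X i ω, g (X i ω)) - (n : ℝ) * μg := by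
      rw [Finset.sum_sub_distrib, Finset.sum_const, Finset.card_univ, Fintype.card_fin,
        nsmul_eq_mul]
    -- first term
    have e1 : |μg - (1 / (n : ℝ)) * ∑ i, ℓ (X i ω, g (X i ω))| ≤ t₀ := by
      have heq : μg - (1 / (n : ℝ)) * ∑ i, ℓ (X i ω, g (X i ω))
          = -((1 / (n : ℝ)) * ∑ i, (ℓ (X i ω, g (X i ω)) - μg)) := by
        rw [hsum1]
        field_simp
        ring
      rw [heq, abs_neg, abs_mul, abs_of_nonneg (by positivity : (0:ℝ) ≤ 1 / (n:ℝ))]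
      calc (1 / (n : ℝ)) * |∑ i, (ℓ (X i ω, g (X i ω)) - μg)| ≤ (1 / (n : ℝ)) * ε :=
            mul_le_mul_of_nonneg_left hωg (by positivity)
        _ = t₀ := by rw [hεdef]; field_simp
    -- second term (Lipschitz)
    have e2 : |(1 / (n : ℝ)) * ∑ i, ℓ (X i ω, g (X i ω))
        - (1 / (n : ℝ)) * ∑ i, ℓ (X i ω, gstar (X i ω))| ≤
        (lam : ℝ) * ((1 / (n : ℝ)) * ∑ i, ‖g (X i ω) - gstar (X i ω)‖) := by
      rw [← mul_sub, ← Finset.sum_sub_distrib, abs_mul,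
        abs_of_nonneg (by positivity : (0:ℝ) ≤ 1 / (n:ℝ))]
      have hterm : ∀ i : Fin n, |ℓ (X i ω, g (X i ω)) - ℓ (X i ω, gstar (X i ω))|
          ≤ (lam : ℝ) * ‖g (X i ω) - gstar (X i ω)‖ := by
        intro i
        have := (hℓlip (X i ω)).dist_le_mul (g (X i ω)) (gstar (X i ω))
        rwa [Real.dist_eq, dist_eq_norm] at this
      calc (1 / (n : ℝ)) * |∑ i, (ℓ (X i ω, g (X i ω)) - ℓ (X i ω, gstar (X i ω)))|
          ≤ (1 / (n : ℝ)) * ∑ i, |ℓ (X i ω, g (X i ω)) - ℓ (X i ω, gstar (X i ω))| :=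
            mul_le_mul_of_nonneg_left (Finset.abs_sum_le_sum_abs _ _) (by positivity)
        _ ≤ (1 / (n : ℝ)) * ∑ i, (lam : ℝ) * ‖g (X i ω) - gstar (X i ω)‖ :=
            mul_le_mul_of_nonneg_left (Finset.sum_le_sum (fun i _ => hterm i)) (by positivity)
        _ = (lam : ℝ) * ((1 / (n : ℝ)) * ∑ i, ‖g (X i ω) - gstar (X i ω)‖) := by
            rw [← Finset.mul_sum]
            ring
    have htri := abs_sub_le μg ((1 / (n : ℝ)) * ∑ i, ℓ (X i ω, g (X i ω)))
      ((1 / (n : ℝ)) * ∑ i, ℓ (X i ω, gstar (X i ω)))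
    calc |μg - (1 / (n : ℝ)) * ∑ i, ℓ (X i ω, gstar (X i ω))| ≤
        |μg - (1 / (n : ℝ)) * ∑ i, ℓ (X i ω, g (X i ω))|
          + |(1 / (n : ℝ)) * ∑ i, ℓ (X i ω, g (X i ω))
            - (1 / (n : ℝ)) * ∑ i, ℓ (X i ω, gstar (X i ω))| := htri
      _ ≤ t₀ + (lam : ℝ) * ((1 / (n : ℝ)) * ∑ i, ‖g (X i ω) - gstar (X i ω)‖) :=
          add_le_add e1 e2
  calc ENNReal.ofReal (1 - δ) = 1 - ENNReal.ofReal δ := by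
        rw [ENNReal.ofReal_sub _ hδ1.le, ENNReal.ofReal_one]
    _ ≤ 1 - ℙ Bad := tsub_le_tsub_left hBad 1
    _ = ℙ Badᶜ := (prob_compl_eq_one_sub hBadMeas).symm
    _ ≤ _ := measure_mono hsub
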